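/- With notation as in the context, let ∂KV_q(m_1,…,m_p) ⊆ KV_q(m_1,…,m_p) denote the subset of tuples (x^1,…,x^p,y) such that x^i_j = ∞ for at least one pair (i,j). Then there is a deformation retraction of KV_q(m_1,…,m_p) onto A that preserves ∂KV_q(m_1,…,m_p) at all times of the homotopy; in particular, A ∩ ∂KV_q(m_1,…,m_p) is a deformation retract of ∂KV_q(m_1,…,m_p), and the inclusion A ∩ ∂KV_q(m_1,…,m_p) ↪ ∂KV_q(m_1,…,m_p) is a homotopy equivalence. -/

import Mathlib

open scoped ENNReal

noncomputable section

namespace KVFlow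

/-- The ambient product `(∏_{i=1}^p ∏_{m_i−w ≤ j < m_i} [0,∞]) × (∏_{q ≤ j ≤ w+q} [0,∞])`
with the product topology. -/
abbrev KVAmb (p : ℕ) (m : Fin p → ℤ) (q w : ℤ) : Type :=
  ((i : Fin p) → {j : ℤ // m i - w ≤ j ∧ j < m i} → ℝ≥0∞) ×
    ({j : ℤ // q ≤ j ∧ j ≤ w + q} → ℝ≥0∞)

/-- `KV_q(m_1,…,m_p)`: the tuples `(x^1,…,x^p,y)` for which there exist integers
`r_0, r_1, …, r_p` with `q ≤ r_0 ≤ w+q`, `m_i − w ≤ r_i ≤ m_i` and `r_1 + ⋯ + r_p ≥ r_0`,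
such that `x^i_j = 0` for `j < r_i`, `y_j = 0` for `j > r_0`, and `y_j = ∞` for at least
one `j`. -/
def KVSet (p : ℕ) (m : Fin p → ℤ) (q w : ℤ) : Set (KVAmb p m q w) :=
  {k | ∃ (r0 : ℤ) (r : Fin p → ℤ),
    q ≤ r0 ∧ r0 ≤ w + q ∧ (∀ i, m i - w ≤ r i ∧ r i ≤ m i) ∧ r0 ≤ ∑ i, r i ∧
    (∀ (i : Fin p) (j : {j : ℤ // m i - w ≤ j ∧ j < m i}), (j : ℤ) < r i → k.1 i j = 0) ∧
    (∀ j : {j : ℤ // q ≤ j ∧ j ≤ w + q}, r0 < (j : ℤ) → k.2 j = 0) ∧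
    (∃ j, k.2 j = ∞)}

/-- The subset `A ⊆ KV_q(m_1,…,m_p)`: the tuples `(x^1,…,x^p,y)` with `y_q = ∞`,
`y_j = 0` for all `j ≠ q`, and such that there exist integers `q_1, …, q_p` with
`q_1 + ⋯ + q_p = q`, `m_i − w ≤ q_i ≤ m_i`, and `x^i_j = 0` for all `j < q_i`. -/
def KVA (p : ℕ) (m : Fin p → ℤ) (q w : ℤ) : Set (KVAmb p m q w) :=
  {k | (∀ j : {j : ℤ // q ≤ j ∧ j ≤ w + q},
        ((j : ℤ) = q → k.2 j = ∞) ∧ ((j : ℤ) ≠ q → k.2 j = 0)) ∧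
    ∃ qs : Fin p → ℤ, (∑ i, qs i) = q ∧ (∀ i, m i - w ≤ qs i ∧ qs i ≤ m i) ∧
      (∀ (i : Fin p) (j : {j : ℤ // m i - w ≤ j ∧ j < m i}), (j : ℤ) < qs i → k.1 i j = 0)}

/-- The boundary `∂KV_q(m_1,…,m_p)`: tuples with `x^i_j = ∞` for at least one pair
`(i,j)`. -/
def KVBd (p : ℕ) (m : Fin p → ℤ) (q w : ℤ) : Set (KVAmb p m q w) :=
  {k | ∃ i j, k.1 i j = ∞}

end KVFlow

open KVFlow

namespace KVProof

/-! Auxiliary speed functions. -/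

noncomputable def ca (t : ℝ) : ℝ≥0∞ := (ENNReal.ofReal (1 - 2*t))⁻¹ * ENNReal.ofReal (2*t)
noncomputable def cb (t : ℝ) : ℝ≥0∞ := (ENNReal.ofReal (2*t - 1))⁻¹ * ENNReal.ofReal (2 - 2*t)

lemma ca_zero : ca 0 = 0 := by simp [ca]

lemma ca_top {t : ℝ} (ht : 1/2 ≤ t) : ca t = ∞ := by
  have h1 : ENNReal.ofReal (1 - 2*t) = 0 := ENNReal.ofReal_eq_zero.mpr (by linarith)
  have h2 : ENNReal.ofReal (2*t) ≠ 0 := by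
    simp only [ne_eq, ENNReal.ofReal_eq_zero, not_le]; linarith
  rw [ca, h1, ENNReal.inv_zero, ENNReal.top_mul h2]

lemma cb_one : cb 1 = 0 := by simp [cb]

lemma cb_top {t : ℝ} (ht : t ≤ 1/2) : cb t = ∞ := by
  have h1 : ENNReal.ofReal (2*t - 1) = 0 := ENNReal.ofReal_eq_zero.mpr (by linarith)
  have h2 : ENNReal.ofReal (2 - 2*t) ≠ 0 := by
    simp only [ne_eq, ENNReal.ofReal_eq_zero, not_le]; linarith
  rw [cb, h1, ENNReal.inv_zero, ENNReal.top_mul h2]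

lemma cb_zero_top : cb 0 = ∞ := cb_top (by norm_num)

lemma ca_one_top : ca 1 = ∞ := ca_top (by norm_num)

lemma ca_or_cb_top (t : ℝ) : ca t = ∞ ∨ cb t = ∞ := by
  rcases le_total t (1/2) with h | h
  · exact Or.inr (cb_top h)
  · exact Or.inl (ca_top h)

lemma ca_cont : Continuous ca := by
  have c1 : Continuous fun t : ℝ => (ENNReal.ofReal (1 - 2*t))⁻¹ := by
    have : Continuous fun t : ℝ => (1 - 2*t) := by fun_prop
    exact continuous_inv.comp (ENNReal.continuous_ofReal.comp this)
  have c2 : Continuous fun t : ℝ => ENNReal.ofReal (2*t) := by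
    have : Continuous fun t : ℝ => 2*t := by fun_prop
    exact ENNReal.continuous_ofReal.comp this
  rw [continuous_iff_continuousAt]
  intro t
  refine ENNReal.Tendsto.mul c1.continuousAt (Or.inl ?_) c2.continuousAt ?_
  · exact ENNReal.inv_ne_zero.mpr ENNReal.ofReal_ne_top
  · rcases lt_or_ge t (1/2) with h | h
    · exact Or.inr (ENNReal.inv_ne_top.mpr
        (by simp only [ne_eq, ENNReal.ofReal_eq_zero, not_le]; linarith))
    · exact Or.inl (by simp only [ne_eq, ENNReal.ofReal_eq_zero, not_le]; linarith)

lemma cb_cont : Continuous cb := by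
  have c1 : Continuous fun t : ℝ => (ENNReal.ofReal (2*t - 1))⁻¹ := by
    have : Continuous fun t : ℝ => (2*t - 1) := by fun_prop
    exact continuous_inv.comp (ENNReal.continuous_ofReal.comp this)
  have c2 : Continuous fun t : ℝ => ENNReal.ofReal (2 - 2*t) := by
    have : Continuous fun t : ℝ => 2 - 2*t := by fun_prop
    exact ENNReal.continuous_ofReal.comp this
  rw [continuous_iff_continuousAt]
  intro t
  refine ENNReal.Tendsto.mul c1.continuousAt (Or.inl ?_) c2.continuousAt ?_
  · exact ENNReal.inv_ne_zero.mpr ENNReal.ofReal_ne_top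
  · rcases lt_or_ge t 1 with h | h
    · exact Or.inl (by simp only [ne_eq, ENNReal.ofReal_eq_zero, not_le]; linarith)
    · exact Or.inr (ENNReal.inv_ne_top.mpr
        (by simp only [ne_eq, ENNReal.ofReal_eq_zero, not_le]; linarith))

/-! Integer adjustment. -/

lemma adjust_aux {p : ℕ} (L : Fin p → ℤ) (q : ℤ) (hL : ∑ i, L i ≤ q) (n : ℕ) :
    ∀ r : Fin p → ℤ, (∀ i, L i ≤ r i) → (∑ i, r i = q + n) →
    ∃ qs : Fin p → ℤ, (∑ i, qs i) = q ∧ ∀ i, L i ≤ qs i ∧ qs i ≤ r i := by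
  induction n with
  | zero => exact fun r hr hs => ⟨r, by omega, fun i => ⟨hr i, le_rfl⟩⟩
  | succ n ih =>
    intro r hr hs
    have hex : ∃ i, L i < r i := by
      by_contra h
      push_neg at h
      have := Finset.sum_le_sum (fun i (_ : i ∈ Finset.univ) => h i)
      omega
    obtain ⟨i0, hi0⟩ := hex
    set r' : Fin p → ℤ := Function.update r i0 (r i0 - 1) with hr'
    have hrr' : ∀ i, r' i ≤ r i := by
      intro i
      by_cases h : i = i0 <;> simp [hr', Function.update, h]
    have hLr' : ∀ i, L i ≤ r' i := by
      intro i
      by_cases h : i = i0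
      · subst h; simp [hr', Function.update]; omega
      · simp [hr', Function.update, h]; exact hr i
    have hsum : ∑ i, r' i = q + n := by
      rw [hr', Finset.sum_update_of_mem (Finset.mem_univ i0)]
      have h2 : ∑ x ∈ Finset.univ \ {i0}, r x + r i0 = ∑ i, r i := by
        rw [Finset.sdiff_singleton_eq_erase]
        exact Finset.sum_erase_add _ _ (Finset.mem_univ i0)
      omega
    obtain ⟨qs, h1, h2⟩ := ih r' hLr' hsum
    exact ⟨qs, h1, fun i => ⟨(h2 i).1, le_trans (h2 i).2 (hrr' i)⟩⟩

lemma adjust {p : ℕ} (L r : Fin p → ℤ) (q : ℤ) (hL : ∑ i, L i ≤ q)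
    (hr : ∀ i, L i ≤ r i) (hq : q ≤ ∑ i, r i) :
    ∃ qs : Fin p → ℤ, (∑ i, qs i) = q ∧ ∀ i, L i ≤ qs i ∧ qs i ≤ r i := by
  obtain ⟨n, hn⟩ : ∃ n : ℕ, ∑ i, r i = q + n := ⟨(∑ i, r i - q).toNat, by omega⟩
  exact adjust_aux L q hL n r hr hn

/-! The flow map. -/

variable {p : ℕ} {m : Fin p → ℤ} {q w : ℤ}

noncomputable def Fmap (k : KVAmb p m q w) (t : ℝ) : KVAmb p m q w :=
  (k.1, fun j => if (j : ℤ) = q then k.2 j + ca t else min (k.2 j) (cb t))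

lemma Fmap_zero (k : KVAmb p m q w) : Fmap k 0 = k := by
  obtain ⟨x, y⟩ := k
  unfold Fmap
  simp only [Prod.mk.injEq, true_and]
  funext j
  by_cases h : (j : ℤ) = q
  · rw [if_pos h, ca_zero, add_zero]
  · rw [if_neg h, cb_zero_top]
    exact min_eq_left le_top

lemma Fmap_cont : Continuous (fun pr : KVAmb p m q w × ℝ => Fmap pr.1 pr.2) := by
  apply Continuous.prodMk
  · exact continuous_fst.comp continuous_fst
  · apply continuous_pi
    intro j
    by_cases h : (j : ℤ) = q
    · simp only [Fmap, if_pos h]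
      exact ((continuous_apply j).comp (continuous_snd.comp continuous_fst)).add
        (ca_cont.comp continuous_snd)
    · simp only [Fmap, if_neg h]
      exact ((continuous_apply j).comp (continuous_snd.comp continuous_fst)).min
        (cb_cont.comp continuous_snd)

lemma Fmap_memKVSet (hw0 : 0 ≤ w) {k : KVAmb p m q w} (hk : k ∈ KVSet p m q w) (t : ℝ) :
    Fmap k t ∈ KVSet p m q w := by
  obtain ⟨r0, r, h1, h2, h3, h4, h5, h6, j0, hj0⟩ := hk
  refine ⟨r0, r, h1, h2, h3, h4, h5, ?_, ?_⟩
  · intro j hj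
    have hne : (j : ℤ) ≠ q := by omega
    show (if (j : ℤ) = q then k.2 j + ca t else min (k.2 j) (cb t)) = 0
    rw [if_neg hne, h6 j hj]
    exact min_eq_left zero_le
  · rcases ca_or_cb_top t with h | h
    · refine ⟨⟨q, le_refl q, by omega⟩, ?_⟩
      show (if (q : ℤ) = q then _ + ca t else min _ (cb t)) = ∞
      rw [if_pos rfl, h]
      simp
    · refine ⟨j0, ?_⟩
      show (if (j0 : ℤ) = q then k.2 j0 + ca t else min (k.2 j0) (cb t)) = ∞
      by_cases hq : (j0 : ℤ) = q
      · rw [if_pos hq, hj0]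
        simp
      · rw [if_neg hq, hj0, h, min_self]

lemma Fmap_one_memA (hp : 1 ≤ p) (hw : w = (∑ i, m i) - q) (hw0 : 0 ≤ w)
    {k : KVAmb p m q w} (hk : k ∈ KVSet p m q w) : Fmap k 1 ∈ KVA p m q w := by
  obtain ⟨r0, r, h1, h2, h3, h4, h5, h6, j0, hj0⟩ := hk
  constructor
  · intro j
    constructor
    · intro hjq
      show (if (j : ℤ) = q then k.2 j + ca 1 else min (k.2 j) (cb 1)) = ∞
      rw [if_pos hjq, ca_one_top]
      simp
    · intro hjq
      show (if (j : ℤ) = q then k.2 j + ca 1 else min (k.2 j) (cb 1)) = 0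
      rw [if_neg hjq, cb_one]
      exact min_eq_right zero_le
  · have hL : ∑ i, (m i - w) ≤ q := by
      have hsum : ∑ i, (m i - w) = (∑ i, m i) - (p : ℤ) * w := by
        rw [Finset.sum_sub_distrib, Finset.sum_const, Finset.card_univ, Fintype.card_fin,
          nsmul_eq_mul]
      have hpw : (1 : ℤ) * w ≤ (p : ℤ) * w :=
        mul_le_mul_of_nonneg_right (by exact_mod_cast hp) hw0
      omega
    obtain ⟨qs, hqs1, hqs2⟩ := adjust (fun i => m i - w) r q hL (fun i => (h3 i).1)
      (le_trans h1 h4)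
    exact ⟨qs, hqs1, fun i => ⟨(hqs2 i).1, le_trans (hqs2 i).2 (h3 i).2⟩,
      fun i j hj => h5 i j (lt_of_lt_of_le hj (hqs2 i).2)⟩

lemma Fmap_one_fix {k : KVAmb p m q w} (hk : k ∈ KVA p m q w) : Fmap k 1 = k := by
  obtain ⟨hy, -⟩ := hk
  obtain ⟨x, y⟩ := k
  unfold Fmap
  simp only [Prod.mk.injEq, true_and]
  funext j
  by_cases h : (j : ℤ) = q
  · have h' : y j = ⊤ := (hy j).1 h
    rw [if_pos h, h']
    simp
  · have h' : y j = 0 := (hy j).2 h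
    rw [if_neg h, h']
    exact min_eq_left zero_le

end KVProof

open KVProof

/-- With `p ≥ 1`, `w := m_1 + ⋯ + m_p − q ≥ 0`, there is a deformation
retraction of `KV_q(m_1,…,m_p)` onto `A` which preserves `∂KV_q(m_1,…,m_p)` at all times
of the homotopy; in particular, `A ∩ ∂KV_q(m_1,…,m_p)` is a deformation retract of
`∂KV_q(m_1,…,m_p)`, and the inclusion `A ∩ ∂KV_q(m_1,…,m_p) ↪ ∂KV_q(m_1,…,m_p)` is a
homotopy equivalence. -/
theorem statement10 (p : ℕ) (hp : 1 ≤ p) (m : Fin p → ℤ) (q w : ℤ)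
    (hw : w = (∑ i, m i) - q) (hw0 : 0 ≤ w) :
    (∃ ρ : ↥(KVSet p m q w) → ↥(KVSet p m q w),
      Continuous ρ ∧
      (∀ k, (↑(ρ k) : KVAmb p m q w) ∈ KVA p m q w) ∧
      (∀ k : ↥(KVSet p m q w), (↑k : KVAmb p m q w) ∈ KVA p m q w → ρ k = k) ∧
      ∃ H : ↥(KVSet p m q w) × unitInterval → ↥(KVSet p m q w),
        Continuous H ∧ (∀ k, H (k, 0) = k) ∧ (∀ k, H (k, 1) = ρ k) ∧
        (∀ (k : ↥(KVSet p m q w)) (t : unitInterval),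
          (↑k : KVAmb p m q w) ∈ KVBd p m q w →
            (↑(H (k, t)) : KVAmb p m q w) ∈ KVBd p m q w)) ∧
    (∃ ρb : ↥(KVSet p m q w ∩ KVBd p m q w) → ↥(KVSet p m q w ∩ KVBd p m q w),
      Continuous ρb ∧
      (∀ k, (↑(ρb k) : KVAmb p m q w) ∈ KVA p m q w) ∧
      (∀ k : ↥(KVSet p m q w ∩ KVBd p m q w),
        (↑k : KVAmb p m q w) ∈ KVA p m q w → ρb k = k) ∧
      ∃ Hb : ↥(KVSet p m q w ∩ KVBd p m q w) × unitInterval →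
          ↥(KVSet p m q w ∩ KVBd p m q w),
        Continuous Hb ∧ (∀ k, Hb (k, 0) = k) ∧ (∀ k, Hb (k, 1) = ρb k)) ∧
    ∃ he : ContinuousMap.HomotopyEquiv
        {k : KVAmb p m q w // k ∈ KVSet p m q w ∩ KVA p m q w ∩ KVBd p m q w}
        ↥(KVSet p m q w ∩ KVBd p m q w),
      ∀ x, (↑(he.toFun x) : KVAmb p m q w) = (↑x : KVAmb p m q w) := by
  refine ⟨?_, ?_, ?_⟩
  · -- Part 1
    refine ⟨fun k => ⟨Fmap k.val 1, Fmap_memKVSet hw0 k.property 1⟩, ?_, ?_, ?_,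
      ⟨fun kt => ⟨Fmap kt.1.val (kt.2 : ℝ), Fmap_memKVSet hw0 kt.1.property _⟩, ?_, ?_, ?_, ?_⟩⟩
    · exact (Fmap_cont.comp (continuous_subtype_val.prodMk continuous_const)).subtype_mk _
    · exact fun k => Fmap_one_memA hp hw hw0 k.property
    · exact fun k hk => Subtype.ext (Fmap_one_fix hk)
    · exact (Fmap_cont.comp ((continuous_subtype_val.comp continuous_fst).prodMk
        (continuous_subtype_val.comp continuous_snd))).subtype_mk _
    · exact fun k => Subtype.ext (Fmap_zero k.val)
    · exact fun k => rfl
    · exact fun k t hk => hk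
  · -- Part 2
    refine ⟨fun k => ⟨Fmap k.val 1, Fmap_memKVSet hw0 k.property.1 1, k.property.2⟩, ?_, ?_, ?_,
      ⟨fun kt => ⟨Fmap kt.1.val (kt.2 : ℝ), Fmap_memKVSet hw0 kt.1.property.1 _,
        kt.1.property.2⟩, ?_, ?_, ?_⟩⟩
    · exact (Fmap_cont.comp (continuous_subtype_val.prodMk continuous_const)).subtype_mk _
    · exact fun k => Fmap_one_memA hp hw hw0 k.property.1
    · exact fun k hk => Subtype.ext (Fmap_one_fix hk)
    · exact (Fmap_cont.comp ((continuous_subtype_val.comp continuous_fst).prodMk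
        (continuous_subtype_val.comp continuous_snd))).subtype_mk _
    · exact fun k => Subtype.ext (Fmap_zero k.val)
    · exact fun k => rfl
  · -- Part 3
    set X := {k : KVAmb p m q w // k ∈ KVSet p m q w ∩ KVA p m q w ∩ KVBd p m q w} with hX
    set Y := ↥(KVSet p m q w ∩ KVBd p m q w) with hY
    have hfc : Continuous fun x : X => ((⟨x.val, x.property.1.1, x.property.2⟩ : Y)) :=
      Continuous.subtype_mk continuous_subtype_val _
    set f : C(X, Y) := ⟨fun x => ⟨x.val, x.property.1.1, x.property.2⟩, hfc⟩ with hf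
    have hgc : Continuous fun y : Y =>
        ((⟨Fmap y.val 1, ⟨Fmap_memKVSet hw0 y.property.1 1,
          Fmap_one_memA hp hw hw0 y.property.1⟩, y.property.2⟩ : X)) :=
      Continuous.subtype_mk
        (Fmap_cont.comp (continuous_subtype_val.prodMk continuous_const)) _
    set g : C(Y, X) := ⟨fun y => ⟨Fmap y.val 1, ⟨Fmap_memKVSet hw0 y.property.1 1,
      Fmap_one_memA hp hw hw0 y.property.1⟩, y.property.2⟩, hgc⟩ with hg
    have hleft : (g.comp f).Homotopic (ContinuousMap.id X) := by
      have : g.comp f = ContinuousMap.id X :=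
        ContinuousMap.ext fun x => Subtype.ext (Fmap_one_fix x.property.1.2)
      rw [this]
    have hHc : Continuous fun yt : unitInterval × Y =>
        ((⟨Fmap yt.2.val (yt.1 : ℝ), Fmap_memKVSet hw0 yt.2.property.1 _,
          yt.2.property.2⟩ : Y)) :=
      Continuous.subtype_mk
        (Fmap_cont.comp ((continuous_subtype_val.comp continuous_snd).prodMk
          (continuous_subtype_val.comp continuous_fst))) _
    have hright : (f.comp g).Homotopic (ContinuousMap.id Y) := by
      refine ⟨ContinuousMap.Homotopy.symm ?_⟩
      exact
        { toFun := fun yt => ⟨Fmap yt.2.val (yt.1 : ℝ), Fmap_memKVSet hw0 yt.2.property.1 _,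
            yt.2.property.2⟩
          continuous_toFun := hHc
          map_zero_left := fun y => Subtype.ext (Fmap_zero y.val)
          map_one_left := fun y => rfl }
    exact ⟨⟨f, g, hleft, hright⟩, fun x => rfl⟩
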